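/- Let a ∈ ℝ and let v ∈ L²(ℝ, ℂ). If for every k ∈ ℕ one has ∫_ℝ v(ξ)·ξ^k·e^{-aξ - ξ²} dξ = 0, then v = 0 almost everywhere. -/

import Mathlib

open MeasureTheory FourierTransform SchwartzMap
open scoped Nat ContDiff ENNReal

/-- Elementary Gaussian-domination bound. -/
lemma gauss_aux (a c x : ℝ) :
    c * |x| + (-(a * x) - x ^ 2) ≤ (|c| + |a|) ^ 2 + (-(x ^ 2) / 2) := by
  have h1 : c * |x| ≤ |c| * |x| := mul_le_mul_of_nonneg_right (le_abs_self c) (abs_nonneg x)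
  have h2 : -(a * x) ≤ |a| * |x| := by
    rw [← abs_mul]; exact neg_le_abs (a * x)
  nlinarith [sq_nonneg (|x| - (|c| + |a|)), sq_abs x, abs_nonneg c, abs_nonneg a,
    mul_nonneg (abs_nonneg c) (abs_nonneg a)]

/-- `L²` function times a gaussian-dominated continuous function is integrable. -/
lemma int_aux {v : ℝ → ℂ} (hv : MemLp v 2 (volume : Measure ℝ))
    {c : ℝ → ℂ} (hc : Continuous c) {C : ℝ}
    (hC : ∀ x, ‖c x‖ ≤ C * Real.exp (-(x ^ 2) / 2)) :
    Integrable (fun x : ℝ ↦ v x * c x) := by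
  have hc2 : MemLp c 2 (volume : Measure ℝ) := by
    rw [memLp_two_iff_integrable_sq_norm hc.aestronglyMeasurable]
    have hint : Integrable (fun x : ℝ ↦ C ^ 2 * Real.exp (-1 * x ^ 2)) :=
      (integrable_exp_neg_mul_sq one_pos).const_mul _
    apply hint.mono' ((hc.norm.pow 2).aestronglyMeasurable)
    filter_upwards with x
    have h0 := norm_nonneg (c x)
    have h1 := hC x
    have h2 : ‖c x‖ ^ 2 ≤ (C * Real.exp (-(x ^ 2) / 2)) ^ 2 := by nlinarith
    have h3 : (C * Real.exp (-(x ^ 2) / 2)) ^ 2 = C ^ 2 * Real.exp (-1 * x ^ 2) := by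
      rw [mul_pow, pow_two (Real.exp _), ← Real.exp_add]
      ring_nf
    calc ‖‖c x‖ ^ 2‖ = ‖c x‖ ^ 2 := by
          rw [Real.norm_eq_abs, abs_of_nonneg (by positivity)]
      _ ≤ C ^ 2 * Real.exp (-1 * x ^ 2) := by rw [← h3]; exact h2
  have h1 : MemLp (c • v) 1 (volume : Measure ℝ) := by
    apply hv.smul hc2
  have h2 := memLp_one_iff_integrable.mp h1
  have : (c • v) = fun x ↦ v x * c x := by
    funext x; simp [smul_eq_mul, mul_comm]
  rwa [this] at h2

theorem stmt_4 (a : ℝ) (v : ℝ → ℂ) (hv : MemLp v 2 (volume : Measure ℝ))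
    (h : ∀ k : ℕ, ∫ ξ : ℝ, v ξ * (ξ : ℂ) ^ k * Complex.exp (-((a : ℂ) * ξ) - (ξ : ℂ) ^ 2) = 0) :
    v =ᵐ[(volume : Measure ℝ)] 0 := by
  classical
  set E : ℝ → ℂ := fun x ↦ Complex.exp (-((a : ℂ) * x) - (x : ℂ) ^ 2) with hEdef
  have hE : ∀ x : ℝ, ‖E x‖ = Real.exp (-(a * x) - x ^ 2) := by
    intro x
    have : -((a : ℂ) * x) - (x : ℂ) ^ 2 = ((-(a * x) - x ^ 2 : ℝ) : ℂ) := by push_cast; ring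
    rw [hEdef]; simp only [this]
    rw [Complex.norm_exp_ofReal]
  have hEc : Continuous E := by
    apply Complex.continuous_exp.comp; fun_prop
  -- integrability of moments
  have hMk : ∀ k : ℕ, Integrable (fun x : ℝ ↦ v x * ((x : ℂ) ^ k * E x)) := by
    intro k
    have hc : Continuous fun x : ℝ ↦ (x : ℂ) ^ k * E x := by fun_prop
    refine int_aux hv hc (C := (k ! : ℝ) * Real.exp ((|1| + |a|) ^ 2)) fun x ↦ ?_
    have hxk : |x| ^ k ≤ (k ! : ℝ) * Real.exp |x| := by
      have h1 : |x| ^ k / (k ! : ℝ) ≤ Real.exp |x| := by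
        calc |x| ^ k / (k ! : ℝ) ≤ ∑ i ∈ Finset.range (k + 1), |x| ^ i / (i ! : ℝ) := by
              refine Finset.single_le_sum (f := fun i ↦ |x| ^ i / (i ! : ℝ))
                (fun i _ ↦ by positivity) (Finset.self_mem_range_succ k)
          _ ≤ Real.exp |x| := Real.sum_le_exp_of_nonneg (abs_nonneg x) _
      have hk : (0 : ℝ) < (k ! : ℝ) := by positivity
      calc |x| ^ k = |x| ^ k / (k ! : ℝ) * (k ! : ℝ) := by field_simp
        _ ≤ Real.exp |x| * (k ! : ℝ) := by gcongr
        _ = (k ! : ℝ) * Real.exp |x| := by ring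
    have hnorm : ‖(x : ℂ) ^ k * E x‖ = |x| ^ k * Real.exp (-(a * x) - x ^ 2) := by
      rw [norm_mul, norm_pow, hE x, Complex.norm_real, Real.norm_eq_abs]
    rw [hnorm]
    calc |x| ^ k * Real.exp (-(a * x) - x ^ 2)
        ≤ ((k ! : ℝ) * Real.exp |x|) * Real.exp (-(a * x) - x ^ 2) := by
          have := Real.exp_pos (-(a * x) - x ^ 2); gcongr
      _ = (k ! : ℝ) * Real.exp (1 * |x| + (-(a * x) - x ^ 2)) := by
          rw [Real.exp_add]; ring
      _ ≤ (k ! : ℝ) * Real.exp ((|1| + |a|) ^ 2 + (-(x ^ 2) / 2)) := by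
          have hk : (0 : ℝ) ≤ (k ! : ℝ) := by positivity
          have := Real.exp_le_exp.mpr (gauss_aux a 1 x)
          exact mul_le_mul_of_nonneg_left this hk
      _ = (k ! : ℝ) * Real.exp ((|1| + |a|) ^ 2) * Real.exp (-(x ^ 2) / 2) := by
          rw [Real.exp_add]; ring
  -- moments vanish, restated
  have hmom : ∀ k : ℕ, ∫ x : ℝ, v x * ((x : ℂ) ^ k * E x) = 0 := by
    intro k
    have := h k
    simp_rw [← mul_assoc]
    exact this
  -- Fourier transform of w := v * E vanishes
  have hFw : ∀ t : ℝ, 𝓕 (fun x : ℝ ↦ v x * E x) t = 0 := by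
    intro t
    set b : ℝ := 2 * Real.pi * |t| with hbdef
    have hb : 0 ≤ b := by positivity
    set z : ℝ → ℂ := fun x ↦ ((-2 * Real.pi * x * t : ℝ) : ℂ) * Complex.I with hzdef
    set F : ℕ → ℝ → ℂ := fun k x ↦ (v x * E x) * (z x ^ k / (k ! : ℂ)) with hFdef
    have hFeq : ∀ k : ℕ, F k = fun x ↦
        (((-2 * Real.pi * t : ℝ) : ℂ) * Complex.I) ^ k / (k ! : ℂ) *
          (v x * ((x : ℂ) ^ k * E x)) := by
      intro k; funext x
      simp only [hFdef, hzdef]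
      push_cast
      ring
    have hFint : ∀ k : ℕ, Integrable (F k) := by
      intro k
      rw [hFeq k]
      exact (hMk k).const_mul _
    have hFzero : ∀ k : ℕ, (∫ x : ℝ, F k x) = 0 := by
      intro k
      rw [hFeq k]
      rw [integral_const_mul, hmom k, mul_zero]
    have hznorm : ∀ x : ℝ, ‖z x‖ ≤ b * |x| := by
      intro x
      rw [hzdef]
      simp only [norm_mul, Complex.norm_real, Complex.norm_I, mul_one, Real.norm_eq_abs]
      have h2 : |(-2 : ℝ)| = 2 := by norm_num
      have hpi : |Real.pi| = Real.pi := abs_of_nonneg Real.pi_pos.le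
      rw [h2, hpi, hbdef]
      exact le_of_eq (by ring)
    have hFnorm : ∀ k x, ‖F k x‖ = ‖v x * E x‖ * (‖z x‖ ^ k / (k ! : ℝ)) := by
      intro k x
      simp [hFdef, norm_mul, norm_div, norm_pow]
    -- dominating function
    set cb : ℝ → ℂ := fun x ↦ ((Real.exp (b * |x|) * Real.exp (-(a * x) - x ^ 2) : ℝ) : ℂ)
      with hcbdef
    have hcbc : Continuous cb := by fun_prop
    have hcbnorm : ∀ x, ‖cb x‖ = Real.exp (b * |x|) * Real.exp (-(a * x) - x ^ 2) := by
      intro x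
      rw [hcbdef]
      simp only [Complex.norm_real, Real.norm_eq_abs]
      exact abs_of_nonneg (by positivity)
    have hρint : Integrable (fun x : ℝ ↦ v x * cb x) := by
      refine int_aux hv hcbc (C := Real.exp ((|b| + |a|) ^ 2)) fun x ↦ ?_
      rw [hcbnorm, ← Real.exp_add, ← Real.exp_add]
      exact Real.exp_le_exp.mpr (gauss_aux a b x)
    have hdom : ∀ n : ℕ, ∀ x : ℝ,
        ∑ k ∈ Finset.range n, ‖F k x‖ ≤ ‖v x * cb x‖ := by
      intro n x
      have h1 : ∑ k ∈ Finset.range n, ‖F k x‖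
          = ‖v x * E x‖ * ∑ k ∈ Finset.range n, ‖z x‖ ^ k / (k ! : ℝ) := by
        rw [Finset.mul_sum]
        exact Finset.sum_congr rfl fun k _ ↦ hFnorm k x
      have h2 : ∑ k ∈ Finset.range n, ‖z x‖ ^ k / (k ! : ℝ) ≤ Real.exp (b * |x|) := by
        calc ∑ k ∈ Finset.range n, ‖z x‖ ^ k / (k ! : ℝ) ≤ Real.exp ‖z x‖ :=
              Real.sum_le_exp_of_nonneg (norm_nonneg _) n
          _ ≤ Real.exp (b * |x|) := Real.exp_le_exp.mpr (hznorm x)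
      have h3 : ‖v x * cb x‖ = ‖v x * E x‖ * Real.exp (b * |x|) := by
        rw [norm_mul, norm_mul, hcbnorm, hE]
        ring
      rw [h1, h3]
      have := norm_nonneg (v x * E x)
      exact mul_le_mul_of_nonneg_left h2 this
    have hsum : Summable fun k : ℕ ↦ ∫ x : ℝ, ‖F k x‖ := by
      apply summable_of_sum_range_le (c := ∫ x : ℝ, ‖v x * cb x‖)
        (fun k ↦ integral_nonneg fun x ↦ norm_nonneg _)
      intro n
      rw [← integral_finset_sum _ (fun k _ ↦ (hFint k).norm)]
      exact integral_mono (integrable_finset_sum _ fun k _ ↦ (hFint k).norm)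
        hρint.norm (fun x ↦ hdom n x)
    have hHS := hasSum_integral_of_summable_integral_norm hFint hsum
    have h0 : (∫ x : ℝ, ∑' k : ℕ, F k x) = 0 := by
      have h0' : (fun k : ℕ ↦ ∫ x : ℝ, F k x) = fun _ ↦ (0 : ℂ) := funext hFzero
      rw [h0'] at hHS
      exact (hHS.unique hasSum_zero)
    have htsum : ∀ x : ℝ, (∑' k : ℕ, F k x) = (v x * E x) * Complex.exp (z x) := by
      intro x
      have hs := NormedSpace.expSeries_div_hasSum_exp (z x)
      have hs2 := hs.mul_left (v x * E x)
      have : NormedSpace.exp (z x) = Complex.exp (z x) :=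
        (congrFun Complex.exp_eq_exp_ℂ (z x)).symm
      rw [this] at hs2
      exact hs2.tsum_eq
    have h0' : (∫ x : ℝ, (v x * E x) * Complex.exp (z x)) = 0 := by
      rw [← h0]
      exact integral_congr_ae (Filter.Eventually.of_forall fun x ↦ (htsum x).symm)
    rw [Real.fourier_real_eq_integral_exp_smul]
    have : (fun x : ℝ ↦ Complex.exp (((-2 * Real.pi * x * t : ℝ) : ℂ) * Complex.I)
        • (v x * E x)) = fun x : ℝ ↦ (v x * E x) * Complex.exp (z x) := by
      funext x
      rw [hzdef, smul_eq_mul, mul_comm]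
    rw [this]
    exact h0'
  -- now conclude using test functions
  have hwint : Integrable (fun x : ℝ ↦ v x * E x) := by
    refine int_aux hv hEc (C := Real.exp ((|(0 : ℝ)| + |a|) ^ 2)) fun x ↦ ?_
    rw [hE]
    have := Real.exp_le_exp.mpr (gauss_aux a 0 x)
    simpa [Real.exp_add] using this
  have hloc : LocallyIntegrable v (volume : Measure ℝ) :=
    hv.locallyIntegrable (by norm_num)
  apply ae_eq_zero_of_integral_contDiff_smul_eq_zero hloc
  intro g g_diff g_supp
  -- build the Schwartz function ψ = g * exp(a x + x²)
  set gc : ℝ → ℂ := fun x ↦ (g x : ℂ) * Complex.exp ((a : ℂ) * x + (x : ℂ) ^ 2) with hgcdef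
  have gc_smooth : ContDiff ℝ ∞ gc := by
    apply ContDiff.mul
    · exact Complex.ofRealCLM.contDiff.comp g_diff
    · apply Complex.contDiff_exp.comp
      have hcoe : ContDiff ℝ ∞ (fun x : ℝ ↦ (x : ℂ)) := Complex.ofRealCLM.contDiff
      exact (contDiff_const.mul hcoe).add (hcoe.pow 2)
  have gc_supp : HasCompactSupport gc := by
    have h1 : HasCompactSupport (fun x : ℝ ↦ (g x : ℂ)) :=
      g_supp.comp_left Complex.ofReal_zero
    exact h1.mul_right
  have gc_decay : ∀ k n : ℕ, ∃ C : ℝ, ∀ x, ‖x‖ ^ k * ‖iteratedFDeriv ℝ n gc x‖ ≤ C := by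
    intro k n
    have hcs : HasCompactSupport (iteratedFDeriv ℝ n gc) := gc_supp.iteratedFDeriv n
    have hco : Continuous (iteratedFDeriv ℝ n gc) :=
      gc_smooth.continuous_iteratedFDeriv (by exact_mod_cast le_top)
    have hcont : Continuous fun x : ℝ ↦ ‖x‖ ^ k * ‖iteratedFDeriv ℝ n gc x‖ := by fun_prop
    have hsupp : HasCompactSupport fun x : ℝ ↦ ‖x‖ ^ k * ‖iteratedFDeriv ℝ n gc x‖ :=
      hcs.norm.mul_left
    obtain ⟨C, hC⟩ := hcont.bounded_above_of_compact_support hsupp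
    exact ⟨C, fun x ↦ by
      have := hC x
      rwa [Real.norm_eq_abs, abs_of_nonneg (by positivity)] at this⟩
  set ψ : 𝓢(ℝ, ℂ) := SchwartzMap.mk gc gc_smooth gc_decay with hψdef
  have hψcoe : ⇑ψ = gc := rfl
  set phi : 𝓢(ℝ, ℂ) := (fourierTransformCLE ℂ 𝓢(ℝ, ℂ)).symm ψ with hphidef
  have hphiψ : 𝓕 ⇑phi = ⇑ψ := by
    have := (fourierTransformCLE ℂ 𝓢(ℝ, ℂ)).apply_symm_apply ψ
    rw [← this]; rfl
  have hflip : (innerₗ ℝ).flip = innerₗ ℝ :=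
    LinearMap.ext fun x ↦ LinearMap.ext fun y ↦ by
    rw [LinearMap.flip_apply, innerₗ_apply_apply, innerₗ_apply_apply]
    exact real_inner_comm x y
  have mult := VectorFourier.integral_fourierIntegral_smul_eq_flip
    (e := Real.fourierChar) (L := innerₗ ℝ) (μ := (volume : Measure ℝ))
    (ν := (volume : Measure ℝ)) Real.continuous_fourierChar continuous_inner
    phi.integrable hwint
  rw [hflip] at mult
  have hlhs : (∫ ξ : ℝ, (VectorFourier.fourierIntegral Real.fourierChar volume
      (innerₗ ℝ) (⇑phi) ξ) • (v ξ * E ξ)) = ∫ ξ : ℝ, ψ ξ * (v ξ * E ξ) := by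
    apply integral_congr_ae
    filter_upwards with ξ
    have : VectorFourier.fourierIntegral Real.fourierChar volume (innerₗ ℝ) (⇑phi) ξ
        = 𝓕 ⇑phi ξ := rfl
    rw [this, hphiψ, smul_eq_mul]
  have hrhs : (∫ x : ℝ, phi x • (VectorFourier.fourierIntegral Real.fourierChar volume
      (innerₗ ℝ) (fun x ↦ v x * E x) x)) = 0 := by
    have : ∀ x : ℝ, VectorFourier.fourierIntegral Real.fourierChar volume (innerₗ ℝ)
        (fun x ↦ v x * E x) x = 0 := fun x ↦ hFw x
    simp [this]
  have key : (∫ ξ : ℝ, ψ ξ * (v ξ * E ξ)) = 0 := by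
    rw [← hlhs, mult, hrhs]
  have : (∫ x : ℝ, g x • v x) = ∫ ξ : ℝ, ψ ξ * (v ξ * E ξ) := by
    apply integral_congr_ae
    filter_upwards with x
    rw [hψcoe, hgcdef]
    have hexp : Complex.exp ((a : ℂ) * x + (x : ℂ) ^ 2) * E x = 1 := by
      rw [hEdef, ← Complex.exp_add]
      ring_nf
      exact Complex.exp_zero
    calc g x • v x = (g x : ℂ) * v x := by
          rw [Complex.real_smul]
      _ = (g x : ℂ) * Complex.exp ((a : ℂ) * x + (x : ℂ) ^ 2) * (v x * E x) := by
          have : (g x : ℂ) * Complex.exp ((a : ℂ) * x + (x : ℂ) ^ 2) * (v x * E x)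
              = (g x : ℂ) * v x * (Complex.exp ((a : ℂ) * x + (x : ℂ) ^ 2) * E x) := by ring
          rw [this, hexp, mul_one]
  rw [this, key]
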